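/- Let x > 0 be a real number and let E be an exponential random variable with rate x (so P(E > t) = e^{-xt} for t ≥ 0). Set X = x·1{E ≤ 1}. Then E[exp(-(X - E[X]))] ≤ exp(E[X]/4). Explicitly: exp(-x·e^{-x}) · (2 - e^{-x}) ≤ exp(x(1 - e^{-x})/4) for all x > 0. -/

import Mathlib

open Real

/-- Padé-type bound: `log u ≥ 3(u²-1)/(u²+4u+1)` for `u ≥ 1`. -/
lemma pade_log (u : ℝ) (hu : 1 ≤ u) :
    3 * (u ^ 2 - 1) / (u ^ 2 + 4 * u + 1) ≤ Real.log u := by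
  set f : ℝ → ℝ := fun v => Real.log v - 3 * (v ^ 2 - 1) / (v ^ 2 + 4 * v + 1) with hf
  have hderiv : ∀ v : ℝ, 1 ≤ v →
      HasDerivAt f ((v - 1) ^ 4 / (v * (v ^ 2 + 4 * v + 1) ^ 2)) v := by
    intro v hv
    have hv0 : 0 < v := lt_of_lt_of_le one_pos hv
    have hDpos : (0:ℝ) < v ^ 2 + 4 * v + 1 := by positivity
    have hD : v ^ 2 + 4 * v + 1 ≠ 0 := hDpos.ne'
    have h1 : HasDerivAt Real.log v⁻¹ v := Real.hasDerivAt_log hv0.ne'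
    have h2 : HasDerivAt (fun v : ℝ => 3 * (v ^ 2 - 1)) (3 * (2 * v)) v := by
      simpa using ((hasDerivAt_pow 2 v).sub_const 1).const_mul 3
    have h3 : HasDerivAt (fun v : ℝ => v ^ 2 + 4 * v + 1) (2 * v + 4) v := by
      simpa using ((hasDerivAt_pow 2 v).add ((hasDerivAt_id v).const_mul 4)).add_const 1
    have h4 := h2.div h3 hD
    have h5 := h1.sub h4
    refine h5.congr_deriv ?_
    field_simp
    ring
  have hmono : MonotoneOn f (Set.Ici 1) := by
    apply monotoneOn_of_deriv_nonneg (convex_Ici 1)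
    · intro v hv
      exact (hderiv v hv).differentiableAt.continuousAt.continuousWithinAt
    · intro v hv
      rw [interior_Ici] at hv
      exact (hderiv v hv.le).differentiableAt.differentiableWithinAt
    · intro v hv
      rw [interior_Ici] at hv
      have hv0 : 0 < v := lt_trans one_pos hv
      rw [(hderiv v hv.le).deriv]
      positivity
  have h0 : f 1 = 0 := by norm_num [hf]
  have h1 : f 1 ≤ f u := hmono Set.self_mem_Ici hu hu
  rw [h0, hf] at h1
  simp only [sub_nonneg] at h1
  linarith [h1]

/-- Polynomial residual is nonnegative on `[0,1]`. -/
lemma polyR (t : ℝ) (h0 : 0 ≤ t) (h1 : t ≤ 1) :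
    0 ≤ 39 + 345*t + 1587*t^2 + 5685*t^3 + 10725*t^4 + 4299*t^5 - 1215*t^6 - 729*t^7 := by
  nlinarith [mul_nonneg (pow_nonneg h0 5) (sub_nonneg.2 h1),
    mul_nonneg (pow_nonneg h0 6) (sub_nonneg.2 h1), pow_nonneg h0 5, pow_nonneg h0 4]

theorem stmt4 (x : ℝ) (hx : 0 < x) :
    Real.exp (-(x * Real.exp (-x))) * (2 - Real.exp (-x)) ≤
      Real.exp (x * (1 - Real.exp (-x)) / 4) := by
  set t : ℝ := Real.exp (-x) with hts
  have ht0 : 0 < t := Real.exp_pos _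
  have ht1 : t < 1 := Real.exp_lt_one_iff.mpr (by linarith)
  -- reduce to `2 - t ≤ exp (x * (1 + 3 t) / 4)`
  suffices h : 2 - t ≤ Real.exp (x * (1 + 3 * t) / 4) by
    have hmul : Real.exp (-(x * t)) * Real.exp (x * (1 + 3 * t) / 4)
        = Real.exp (x * (1 - t) / 4) := by
      rw [← Real.exp_add]; ring_nf
    calc Real.exp (-(x * t)) * (2 - t)
        ≤ Real.exp (-(x * t)) * Real.exp (x * (1 + 3 * t) / 4) :=
          mul_le_mul_of_nonneg_left h (Real.exp_pos _).le
      _ = Real.exp (x * (1 - t) / 4) := hmul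
  -- lower bound on x via the Padé bound applied to u = exp x
  set u : ℝ := Real.exp x with hus
  have hu1 : 1 ≤ u := Real.one_le_exp hx.le
  have hut : u * t = 1 := by rw [hus, hts, ← Real.exp_add]; simp
  have hx_lb : 3 * (1 - t ^ 2) / (t ^ 2 + 4 * t + 1) ≤ x := by
    have hp := pade_log u hu1
    rw [hus, Real.log_exp] at hp
    have heq : 3 * (u ^ 2 - 1) / (u ^ 2 + 4 * u + 1)
        = 3 * (1 - t ^ 2) / (t ^ 2 + 4 * t + 1) := by
      have hu0 : u ≠ 0 := (lt_of_lt_of_le one_pos hu1).ne'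
      have hDu : u ^ 2 + 4 * u + 1 ≠ 0 := by positivity
      have hDt : t ^ 2 + 4 * t + 1 ≠ 0 := by positivity
      have htu : t = u⁻¹ := by field_simp; linarith [hut]
      rw [htu]
      field_simp
      ring
    rw [heq] at hp
    exact hp
  set α : ℝ := 3 * (1 - t ^ 2) / (t ^ 2 + 4 * t + 1) with hα
  have hα0 : 0 ≤ α := by
    apply div_nonneg
    · nlinarith
    · positivity
  set z : ℝ := α * (1 + 3 * t) / 4 with hz
  have hz0 : 0 ≤ z := by
    apply div_nonneg _ (by norm_num)
    apply mul_nonneg hα0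
    nlinarith
  have hzy : z ≤ x * (1 + 3 * t) / 4 := by
    have h13 : (0:ℝ) ≤ 1 + 3 * t := by nlinarith
    rw [hz]
    gcongr
  -- cubic lower bound for exp
  have hcubic : 1 + z + z ^ 2 / 2 + z ^ 3 / 6 ≤ Real.exp z := by
    have h := Real.sum_le_exp_of_nonneg hz0 4
    have he : ∑ i ∈ Finset.range 4, z ^ i / (i.factorial : ℝ) = 1 + z + z ^ 2 / 2 + z ^ 3 / 6 := by
      simp [Finset.sum_range_succ, Nat.factorial]
      try ring
    rw [he] at h
    exact h
  -- polynomial step: 2 - t ≤ 1 + z + z²/2 + z³/6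
  have hpoly : 2 - t ≤ 1 + z + z ^ 2 / 2 + z ^ 3 / 6 := by
    have hD : (0:ℝ) < t ^ 2 + 4 * t + 1 := by positivity
    have hkey : 1 + z + z ^ 2 / 2 + z ^ 3 / 6 - (2 - t)
        = (1 - t) ^ 2 *
          (39 + 345*t + 1587*t^2 + 5685*t^3 + 10725*t^4 + 4299*t^5 - 1215*t^6 - 729*t^7)
          / (384 * (t ^ 2 + 4 * t + 1) ^ 3) := by
      rw [hz, hα]
      field_simp
      ring
    have hR := polyR t ht0.le ht1.le
    have : 0 ≤ 1 + z + z ^ 2 / 2 + z ^ 3 / 6 - (2 - t) := by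
      rw [hkey]
      positivity
    linarith
  calc 2 - t ≤ 1 + z + z ^ 2 / 2 + z ^ 3 / 6 := hpoly
    _ ≤ Real.exp z := hcubic
    _ ≤ Real.exp (x * (1 + 3 * t) / 4) := Real.exp_le_exp.mpr hzy
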